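/- Assume α > 0. Let A be a finite subset of M.E and let C be a finite subset of (M.closure A ∩ P) \ A such that δ(A ∪ C) ≥ 0. Then α·|C| ≤ δ(A); in particular, since δ(A) ≤ |A|, one has |C| ≤ |A|/α. -/

import Mathlib

open Set

/-- The rank of a (finite) set in a matroid: the supremum of cardinalities of independent
subsets. -/
noncomputable def mRk {V : Type*} (M : Matroid V) (A : Set V) : ℕ :=
  sSup {n : ℕ | ∃ I : Set V, M.Indep I ∧ I ⊆ A ∧ I.ncard = n}

/-- The predimension `δ(A) = r(A) - α·|A ∩ P|` of a finite set `A`, where `P` is the set of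
colored elements. -/
noncomputable def mDelta {V : Type*} (M : Matroid V) (P : Set V) (α : ℝ) (A : Set V) : ℝ :=
  (mRk M A : ℝ) - α * ((A ∩ P).ncard : ℝ)

lemma mRk_set_nonempty {V : Type*} (M : Matroid V) (A : Set V) :
    {n : ℕ | ∃ I : Set V, M.Indep I ∧ I ⊆ A ∧ I.ncard = n}.Nonempty :=
  ⟨0, ∅, M.empty_indep, empty_subset _, by simp⟩

lemma mRk_set_bddAbove {V : Type*} (M : Matroid V) {A : Set V} (hA : A.Finite) :
    BddAbove {n : ℕ | ∃ I : Set V, M.Indep I ∧ I ⊆ A ∧ I.ncard = n} := by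
  refine ⟨A.ncard, ?_⟩
  rintro n ⟨I, -, hIA, rfl⟩
  exact Set.ncard_le_ncard hIA hA

lemma le_mRk {V : Type*} (M : Matroid V) {A I : Set V} (hA : A.Finite)
    (hI : M.Indep I) (hIA : I ⊆ A) : I.ncard ≤ mRk M A :=
  le_csSup (mRk_set_bddAbove M hA) ⟨I, hI, hIA, rfl⟩

lemma mRk_le_ncard {V : Type*} (M : Matroid V) {A : Set V} (hA : A.Finite) :
    mRk M A ≤ A.ncard := by
  refine csSup_le (mRk_set_nonempty M A) ?_
  rintro n ⟨I, -, hIA, rfl⟩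
  exact Set.ncard_le_ncard hIA hA

lemma mRk_union_of_subset_closure {V : Type*} (M : Matroid V) {A C : Set V}
    (hAE : A ⊆ M.E) (hA : A.Finite) (hCfin : C.Finite) (hC : C ⊆ M.closure A) :
    mRk M (A ∪ C) = mRk M A := by
  refine le_antisymm ?_ ?_
  · refine csSup_le (mRk_set_nonempty M _) ?_
    rintro n ⟨I, hI, hIAC, rfl⟩
    -- get a basis' J of A
    obtain ⟨J, hJ⟩ := M.exists_isBasis' A
    have hJA : J ⊆ A := hJ.subset
    have hclJ : M.closure J = M.closure A := hJ.closure_eq_closure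
    have hIcl : I ⊆ M.closure J := by
      rw [hclJ]
      exact hIAC.trans (union_subset (M.subset_closure A hAE) hC)
    have hJbasis : M.IsBasis J (M.closure J) := hJ.indep.isBasis_closure
    obtain ⟨K, hK, hIK⟩ := hI.subset_isBasis_of_subset hIcl (M.closure_subset_ground J)
    have hcard : K.encard = J.encard := hK.encard_eq_encard hJbasis
    have hJfin : J.Finite := hA.subset hJA
    have hKfin : K.Finite := by
      rw [← Set.encard_lt_top_iff, hcard, Set.encard_lt_top_iff]
      exact hJfin
    have h1 : I.ncard ≤ K.ncard := Set.ncard_le_ncard hIK hKfin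
    have h2 : K.ncard = J.ncard := by
      rw [Set.ncard_def, Set.ncard_def, hcard]
    calc I.ncard ≤ J.ncard := by omega
      _ ≤ mRk M A := le_mRk M hA hJ.indep hJA
  · refine csSup_le (mRk_set_nonempty M _) ?_
    rintro n ⟨I, hI, hIA, rfl⟩
    exact le_mRk M (hA.union hCfin) hI (hIA.trans subset_union_left)

/-- If `α > 0`, `A` is a finite subset of the ground set and `C` is a finite set of colored
elements of the closure of `A` lying outside `A` with `δ(A ∪ C) ≥ 0`, then `α·|C| ≤ δ(A)`;
in particular `|C| ≤ |A|/α`. -/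
theorem bicolored_colored_algebraic_bound {V : Type*} (M : Matroid V) (P : Set V) (α : ℝ)
    (hα : 0 < α) (A : Set V) (hA : A ⊆ M.E) (hAfin : A.Finite)
    (C : Set V) (hCfin : C.Finite) (hC : C ⊆ (M.closure A ∩ P) \ A)
    (hdelta : 0 ≤ mDelta M P α (A ∪ C)) :
    α * (C.ncard : ℝ) ≤ mDelta M P α A ∧ (C.ncard : ℝ) ≤ (A.ncard : ℝ) / α := by
  have hCcl : C ⊆ M.closure A := fun x hx => (hC hx).1.1
  have hCP : C ⊆ P := fun x hx => (hC hx).1.2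
  have hCA : Disjoint C A := disjoint_left.mpr fun x hx => (hC hx).2
  have hrank : mRk M (A ∪ C) = mRk M A := mRk_union_of_subset_closure M hA hAfin hCfin hCcl
  have hinter : (A ∪ C) ∩ P = (A ∩ P) ∪ C := by
    rw [union_inter_distrib_right, inter_eq_self_of_subset_left hCP]
  have hcard : ((A ∪ C) ∩ P).ncard = (A ∩ P).ncard + C.ncard := by
    rw [hinter]
    exact Set.ncard_union_eq (hCA.symm.mono_left inter_subset_left)
      (hAfin.subset inter_subset_left) hCfin
  have hdelta' : mDelta M P α (A ∪ C) = mDelta M P α A - α * C.ncard := by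
    unfold mDelta
    rw [hrank, hcard]
    push_cast
    ring
  have h1 : α * (C.ncard : ℝ) ≤ mDelta M P α A := by
    rw [hdelta'] at hdelta; linarith
  refine ⟨h1, ?_⟩
  have h2 : mDelta M P α A ≤ (A.ncard : ℝ) := by
    unfold mDelta
    have : (mRk M A : ℝ) ≤ (A.ncard : ℝ) := by
      exact_mod_cast mRk_le_ncard M hAfin
    nlinarith [Nat.card_coe_set_eq (A ∩ P), mul_nonneg hα.le
      (Nat.cast_nonneg ((A ∩ P).ncard) : (0:ℝ) ≤ ((A ∩ P).ncard : ℝ))]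
  rw [le_div_iff₀ hα]
  nlinarith
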